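/- For any even integer t ≥ 4 and any integer β ≥ 6, neither U_t(x) nor W_t(x) is divisible in ℚ[x] by any polynomial V(x) ∈ ℚ[x] that has at least two nonzero terms and such that every exponent occurring with nonzero coefficient in V is divisible by β. -/

import Mathlib

open Polynomial

/-- `U_t(x) = 2x^{2t−1} + x^{t+3} − x^{t+2} + x^{t+1} − 3x^t + 3x^{t−1} − x^{t−2} + x^{t−3}
− x^{t−4} − 2`. -/
noncomputable def Upoly (t : ℕ) : Polynomial ℚ :=
  C 2 * X ^ (2 * t - 1) + X ^ (t + 3) - X ^ (t + 2) + X ^ (t + 1) - C 3 * X ^ t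
    + C 3 * X ^ (t - 1) - X ^ (t - 2) + X ^ (t - 3) - X ^ (t - 4) - C 2

/-- `W_t(x) = 2x^{2t−1} − x^{t+3} + x^{t+2} − x^{t+1} − x^t + x^{t−1} + x^{t−2} − x^{t−3}
+ x^{t−4} − 2`. -/
noncomputable def Wpoly (t : ℕ) : Polynomial ℚ :=
  C 2 * X ^ (2 * t - 1) - X ^ (t + 3) + X ^ (t + 2) - X ^ (t + 1) - X ^ t + X ^ (t - 1)
    + X ^ (t - 2) - X ^ (t - 3) + X ^ (t - 4) - C 2

/-- The "section" of a polynomial: keep only terms whose exponent is `≡ r mod β`. -/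
noncomputable def secpoly (β r : ℕ) (P : Polynomial ℚ) : Polynomial ℚ :=
  ∑ n ∈ P.support.filter (fun n => n % β = r), monomial n (P.coeff n)

lemma coeff_secpoly (β r : ℕ) (P : Polynomial ℚ) (m : ℕ) :
    (secpoly β r P).coeff m = if m % β = r then P.coeff m else 0 := by
  unfold secpoly
  rw [finset_sum_coeff]
  simp only [coeff_monomial]
  rw [Finset.sum_ite_eq']
  by_cases h : m % β = r
  · by_cases hm : m ∈ P.support
    · simp [h, hm, Finset.mem_filter]
    · simp [h, hm, Finset.mem_filter, Polynomial.notMem_support_iff.mp hm]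
  · simp [h, Finset.mem_filter]

lemma secpoly_mul (β r : ℕ) (V Q : Polynomial ℚ) (hV : ∀ k ∈ V.support, β ∣ k) :
    secpoly β r (V * Q) = V * secpoly β r Q := by
  ext m
  rw [coeff_secpoly, coeff_mul, coeff_mul]
  have key : ∀ p ∈ Finset.HasAntidiagonal.antidiagonal m,
      V.coeff p.1 * (secpoly β r Q).coeff p.2
        = if m % β = r then V.coeff p.1 * Q.coeff p.2 else 0 := by
    intro p hp
    rw [Finset.HasAntidiagonal.mem_antidiagonal] at hp
    by_cases hv : V.coeff p.1 = 0
    · simp [hv]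
    · obtain ⟨k, hk⟩ := hV _ (mem_support_iff.mpr hv)
      have hmod : p.2 % β = m % β := by
        rw [← hp, hk, Nat.mul_add_mod]
      rw [coeff_secpoly, hmod]
      by_cases h : m % β = r <;> simp [h]
  rw [Finset.sum_congr rfl key]
  by_cases h : m % β = r <;> simp [h]

lemma not_dvd_aux (t β : ℕ) (ht : 4 ≤ t) (hβ : 6 ≤ β) (P : Polynomial ℚ)
    (hsupp : ∀ n, P.coeff n ≠ 0 → n = 0 ∨ (t - 4 ≤ n ∧ n ≤ t + 3) ∨ n = 2 * t - 1)
    (e : ℕ) (he1 : t - 2 ≤ e) (he2 : e ≤ t - 1) (hce : P.coeff e ≠ 0)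
    (hβe : ¬ β ∣ e) (hβe2 : ¬ β ∣ (2 * t - 1 - e))
    (V : Polynomial ℚ) (hV : 2 ≤ V.support.card)
    (hexp : ∀ k ∈ V.support, β ∣ k) : ¬ V ∣ P := by
  rintro ⟨Q, hQ⟩
  have hsingle : ∀ m, m ≠ e → m % β = e % β → P.coeff m = 0 := by
    intro m hme h
    by_contra hc
    rcases hsupp m hc with h0 | hmid | htop
    · subst h0
      exact hβe (Nat.dvd_of_mod_eq_zero (by simpa using h.symm))
    · rcases le_or_gt m e with hle | hlt
      · have hd := (Nat.modEq_iff_dvd' hle).mp h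
        have := Nat.le_of_dvd (by omega) hd
        omega
      · have hd := (Nat.modEq_iff_dvd' (le_of_lt hlt)).mp h.symm
        have := Nat.le_of_dvd (by omega) hd
        omega
    · subst htop
      exact hβe2 ((Nat.modEq_iff_dvd' (by omega)).mp h.symm)
  have hsec : secpoly β (e % β) P = V * secpoly β (e % β) Q := by
    rw [hQ, secpoly_mul β _ V Q hexp]
  have hmono : secpoly β (e % β) P = C (P.coeff e) * X ^ e := by
    ext m
    rw [coeff_secpoly, coeff_C_mul, coeff_X_pow]
    by_cases hm : m = e
    · simp [hm]
    · rw [if_neg hm, mul_zero]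
      by_cases h : m % β = e % β
      · rw [if_pos h, hsingle m hm h]
      · rw [if_neg h]
  have hdvd : V ∣ C (P.coeff e) * X ^ e := ⟨secpoly β (e % β) Q, by rw [← hmono, hsec]⟩
  have hX : V ∣ (X : Polynomial ℚ) ^ e := by
    have h1 : C (P.coeff e)⁻¹ * (C (P.coeff e) * X ^ e) = X ^ e := by
      rw [← mul_assoc, ← C_mul, inv_mul_cancel₀ hce, C_1, one_mul]
    exact h1 ▸ hdvd.mul_left _
  obtain ⟨i, _, hassoc⟩ := (dvd_prime_pow Polynomial.prime_X e).mp hX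
  obtain ⟨u, hu⟩ := hassoc.symm
  obtain ⟨a, haU, hCa⟩ := Polynomial.isUnit_iff.mp u.isUnit
  have hVeq : V = C a * X ^ i := by rw [← hu, ← hCa, mul_comm]
  rw [hVeq, Polynomial.support_C_mul_X_pow i haU.ne_zero] at hV
  simp at hV

lemma exists_good (t β : ℕ) (ht : 4 ≤ t) (hβ : 6 ≤ β) :
    ∃ e, (e = t - 2 ∨ e = t - 1) ∧ ¬ β ∣ e ∧ ¬ β ∣ (2 * t - 1 - e) := by
  have small : ∀ a b : ℕ, β ∣ a → β ∣ b → a < b → b - a < 6 → False := by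
    intro a b ha hb hab hd
    have := Nat.le_of_dvd (by omega) (Nat.dvd_sub hb ha)
    omega
  have h3 : 2 * t - 1 - (t - 1) = t := by omega
  by_cases ha : β ∣ (t - 2)
  · refine ⟨t - 1, Or.inr rfl, ?_, ?_⟩
    · intro h; exact small (t - 2) (t - 1) ha h (by omega) (by omega)
    · rw [h3]; intro h; exact small (t - 2) t ha h (by omega) (by omega)
  · by_cases hb : β ∣ (t + 1)
    · refine ⟨t - 1, Or.inr rfl, ?_, ?_⟩
      · intro h; exact small (t - 1) (t + 1) h hb (by omega) (by omega)
      · rw [h3]; intro h; exact small t (t + 1) h hb (by omega) (by omega)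
    · exact ⟨t - 2, Or.inl rfl, ha, by rw [show 2 * t - 1 - (t - 2) = t + 1 by omega]; exact hb⟩

lemma Upoly_supp (t : ℕ) (ht : 4 ≤ t) (n : ℕ) (h : (Upoly t).coeff n ≠ 0) :
    n = 0 ∨ (t - 4 ≤ n ∧ n ≤ t + 3) ∨ n = 2 * t - 1 := by
  by_contra hc
  push_neg at hc
  obtain ⟨h0, hmid, htop⟩ := hc
  apply h
  simp only [Upoly, coeff_add, coeff_sub, coeff_C_mul, coeff_X_pow, coeff_C]
  norm_num [show ¬(n = 2 * t - 1) by omega, show ¬(n = t + 3) by omega,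
    show ¬(n = t + 2) by omega, show ¬(n = t + 1) by omega, show ¬(n = t) by omega,
    show ¬(n = t - 1) by omega, show ¬(n = t - 2) by omega, show ¬(n = t - 3) by omega,
    show ¬(n = t - 4) by omega, show ¬(n = 0) by omega]

lemma Wpoly_supp (t : ℕ) (ht : 4 ≤ t) (n : ℕ) (h : (Wpoly t).coeff n ≠ 0) :
    n = 0 ∨ (t - 4 ≤ n ∧ n ≤ t + 3) ∨ n = 2 * t - 1 := by
  by_contra hc
  push_neg at hc
  obtain ⟨h0, hmid, htop⟩ := hc
  apply h
  simp only [Wpoly, coeff_add, coeff_sub, coeff_C_mul, coeff_X_pow, coeff_C]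
  norm_num [show ¬(n = 2 * t - 1) by omega, show ¬(n = t + 3) by omega,
    show ¬(n = t + 2) by omega, show ¬(n = t + 1) by omega, show ¬(n = t) by omega,
    show ¬(n = t - 1) by omega, show ¬(n = t - 2) by omega, show ¬(n = t - 3) by omega,
    show ¬(n = t - 4) by omega, show ¬(n = 0) by omega]

lemma Upoly_coeff_e2 (t : ℕ) (ht : 4 ≤ t) : (Upoly t).coeff (t - 2) = -1 := by
  simp only [Upoly, coeff_add, coeff_sub, coeff_C_mul, coeff_X_pow, coeff_C]
  norm_num [show ¬(t - 2 = 2 * t - 1) by omega, show ¬(t - 2 = t + 3) by omega, show ¬(t - 2 = t + 2) by omega, show ¬(t - 2 = t + 1) by omega, show ¬(t - 2 = t) by omega, show ¬(t - 2 = t - 1) by omega, show ¬(t - 2 = t - 3) by omega, show ¬(t - 2 = t - 4) by omega, show ¬(t - 2 = 0) by omega]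

lemma Upoly_coeff_e1 (t : ℕ) (ht : 4 ≤ t) : (Upoly t).coeff (t - 1) = 3 := by
  simp only [Upoly, coeff_add, coeff_sub, coeff_C_mul, coeff_X_pow, coeff_C]
  norm_num [show ¬(t - 1 = 2 * t - 1) by omega, show ¬(t - 1 = t + 3) by omega, show ¬(t - 1 = t + 2) by omega, show ¬(t - 1 = t + 1) by omega, show ¬(t - 1 = t) by omega, show ¬(t - 1 = t - 2) by omega, show ¬(t - 1 = t - 3) by omega, show ¬(t - 1 = t - 4) by omega, show ¬(t - 1 = 0) by omega]

lemma Wpoly_coeff_e2 (t : ℕ) (ht : 4 ≤ t) : (Wpoly t).coeff (t - 2) = 1 := by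
  simp only [Wpoly, coeff_add, coeff_sub, coeff_C_mul, coeff_X_pow, coeff_C]
  norm_num [show ¬(t - 2 = 2 * t - 1) by omega, show ¬(t - 2 = t + 3) by omega, show ¬(t - 2 = t + 2) by omega, show ¬(t - 2 = t + 1) by omega, show ¬(t - 2 = t) by omega, show ¬(t - 2 = t - 1) by omega, show ¬(t - 2 = t - 3) by omega, show ¬(t - 2 = t - 4) by omega, show ¬(t - 2 = 0) by omega]

lemma Wpoly_coeff_e1 (t : ℕ) (ht : 4 ≤ t) : (Wpoly t).coeff (t - 1) = 1 := by
  simp only [Wpoly, coeff_add, coeff_sub, coeff_C_mul, coeff_X_pow, coeff_C]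
  norm_num [show ¬(t - 1 = 2 * t - 1) by omega, show ¬(t - 1 = t + 3) by omega, show ¬(t - 1 = t + 2) by omega, show ¬(t - 1 = t + 1) by omega, show ¬(t - 1 = t) by omega, show ¬(t - 1 = t - 2) by omega, show ¬(t - 1 = t - 3) by omega, show ¬(t - 1 = t - 4) by omega, show ¬(t - 1 = 0) by omega]

/-- For even `t ≥ 4` and `β ≥ 6`, neither `U_t` nor `W_t` is divisible by any rational
polynomial with at least two nonzero terms all of whose exponents are divisible by `β`. -/
theorem UWpoly_not_dvd_by_beta_lacunary (t : ℕ) (ht : 4 ≤ t) (hte : Even t) (β : ℕ)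
    (hβ : 6 ≤ β) (V : Polynomial ℚ) (hV : 2 ≤ V.support.card)
    (hexp : ∀ k ∈ V.support, β ∣ k) :
    ¬ V ∣ Upoly t ∧ ¬ V ∣ Wpoly t := by
  obtain ⟨e, hecase, hβe, hβe2⟩ := exists_good t β ht hβ
  constructor
  · rcases hecase with rfl | rfl
    · exact not_dvd_aux t β ht hβ _ (Upoly_supp t ht) (t - 2) le_rfl (by omega)
        (by rw [Upoly_coeff_e2 t ht]; norm_num) hβe hβe2 V hV hexp
    · exact not_dvd_aux t β ht hβ _ (Upoly_supp t ht) (t - 1) (by omega) le_rfl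
        (by rw [Upoly_coeff_e1 t ht]; norm_num) hβe hβe2 V hV hexp
  · rcases hecase with rfl | rfl
    · exact not_dvd_aux t β ht hβ _ (Wpoly_supp t ht) (t - 2) le_rfl (by omega)
        (by rw [Wpoly_coeff_e2 t ht]; norm_num) hβe hβe2 V hV hexp
    · exact not_dvd_aux t β ht hβ _ (Wpoly_supp t ht) (t - 1) (by omega) le_rfl
        (by rw [Wpoly_coeff_e1 t ht]; norm_num) hβe hβe2 V hV hexp
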